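/- Let n, η : Ω → ℝ^m and x : Ω → ℝ^k be random vectors on a probability space (Ω, F, P) with square-integrable components, suppose n is independent of the pair (x, η), and suppose E[n_i] = 1 for every i. Let A ∈ ℝ^{m×k} and let e = (n − 1) ⊙ (Ax) + η be the embedded error. Then for all indices i, j, cov(e_i, x_j) = cov(η_i, x_j); that is, the cross-covariance satisfies Γ_ex = Γ_ηx. -/

import Mathlib

open MeasureTheory Matrix
open scoped NNReal ENNReal

/-- Product of two L² functions is integrable. -/
lemma integrable_mul_of_memL2 {Ω : Type*} [MeasurableSpace Ω] {P : Measure Ω}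
    {f g : Ω → ℝ} (hf : MemLp f 2 P) (hg : MemLp g 2 P) :
    Integrable (fun ω => f ω * g ω) P := by
  have h : MemLp (g • f) 1 P := hf.smul (r := 1) hg
  rw [memLp_one_iff_integrable] at h
  exact (by simpa [Pi.smul_apply, smul_eq_mul, mul_comm] using h : Integrable (f * g) P)

/-- Cross-covariance of the embedded error `e = (n - 1) ⊙ (A x) + η` with `x`:
if `n` is independent of the pair `(x, η)`, the components are square-integrable and
`E[n i] = 1`, then `cov(e i, x j) = cov(η i, x j)`, i.e. `Γ_ex = Γ_ηx`. -/
theorem embedded_error_cross_covariance {Ω : Type*} [MeasurableSpace Ω]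
    (P : Measure Ω) [IsProbabilityMeasure P] {m k : ℕ}
    (n η : Ω → Fin m → ℝ) (x : Ω → Fin k → ℝ)
    (hn : Measurable n) (hη : Measurable η) (hx : Measurable x)
    (hn2 : ∀ i, MemLp (fun ω => n ω i) 2 P)
    (hη2 : ∀ i, MemLp (fun ω => η ω i) 2 P)
    (hx2 : ∀ j, MemLp (fun ω => x ω j) 2 P)
    (hindep : Measure.map (fun ω => (n ω, (x ω, η ω))) P
        = (Measure.map n P).prod (Measure.map (fun ω => (x ω, η ω)) P))
    (hnmean : ∀ i, ∫ ω, n ω i ∂P = 1)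
    (A : Matrix (Fin m) (Fin k) ℝ) (i : Fin m) (j : Fin k) :
    let e : Ω → Fin m → ℝ := fun ω i => (n ω i - 1) * A.mulVec (x ω) i + η ω i
    (∫ ω, e ω i * x ω j ∂P) - (∫ ω, e ω i ∂P) * (∫ ω, x ω j ∂P)
      = (∫ ω, η ω i * x ω j ∂P) - (∫ ω, η ω i ∂P) * (∫ ω, x ω j ∂P) := by
  intro e
  -- basic integrability
  have hni : Integrable (fun ω => n ω i) P := (hn2 i).integrable one_le_two
  have hf2 : MemLp (fun ω => n ω i - 1) 2 P := (hn2 i).sub (memLp_const 1)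
  have hfi : Integrable (fun ω => n ω i - 1) P := hf2.integrable one_le_two
  have hEf : ∫ ω, (n ω i - 1) ∂P = 0 := by
    rw [integral_sub hni (integrable_const 1), hnmean i]
    simp
  have hAx2 : MemLp (fun ω => A.mulVec (x ω) i) 2 P := by
    simp only [Matrix.mulVec, dotProduct]
    have h := memLp_finset_sum' (μ := P) Finset.univ
      (f := fun l ω => A i l * x ω l) (fun l _ => (hx2 l).const_mul (A i l))
    have heq : (fun ω => ∑ l, A i l * x ω l) = ∑ l, fun ω => A i l * x ω l := by
      funext ω; simp
    rw [heq]; exact h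
  have hAxm : Measurable (fun ω => A.mulVec (x ω) i) := by
    simp only [Matrix.mulVec, dotProduct]
    exact Finset.measurable_sum _ fun l _ => ((hx.eval).const_mul (A i l))
  -- independence
  have hI : ProbabilityTheory.IndepFun n (fun ω => (x ω, η ω)) P :=
    (ProbabilityTheory.indepFun_iff_map_prod_eq_prod_map_map hn.aemeasurable
      (hx.prodMk hη).aemeasurable).mpr hindep
  have hφ : Measurable (fun v : Fin m → ℝ => v i - 1) :=
    (measurable_pi_apply i).sub measurable_const
  have hψ1 : Measurable (fun p : (Fin k → ℝ) × (Fin m → ℝ) => A.mulVec p.1 i * p.1 j) := by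
    refine Measurable.mul ?_ ((measurable_pi_apply j).comp measurable_fst)
    simp only [Matrix.mulVec, dotProduct]
    exact Finset.measurable_sum _ fun l _ =>
      ((measurable_pi_apply l).comp measurable_fst :
        Measurable fun p : (Fin k → ℝ) × (Fin m → ℝ) => p.1 l).const_mul (A i l)
  have hψ2 : Measurable (fun p : (Fin k → ℝ) × (Fin m → ℝ) => A.mulVec p.1 i) := by
    simp only [Matrix.mulVec, dotProduct]
    exact Finset.measurable_sum _ fun l _ =>
      ((measurable_pi_apply l).comp measurable_fst :
        Measurable fun p : (Fin k → ℝ) × (Fin m → ℝ) => p.1 l).const_mul (A i l)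
  have hI1 : ProbabilityTheory.IndepFun (fun ω => n ω i - 1)
      (fun ω => A.mulVec (x ω) i * x ω j) P := hI.comp hφ hψ1
  have hI2 : ProbabilityTheory.IndepFun (fun ω => n ω i - 1)
      (fun ω => A.mulVec (x ω) i) P := hI.comp hφ hψ2
  -- integrability of products
  have hg1int : Integrable (fun ω => A.mulVec (x ω) i * x ω j) P :=
    integrable_mul_of_memL2 hAx2 (hx2 j)
  have hηxint : Integrable (fun ω => η ω i * x ω j) P :=
    integrable_mul_of_memL2 (hη2 i) (hx2 j)
  have hηint : Integrable (fun ω => η ω i) P := (hη2 i).integrable one_le_two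
  have hfg1 : Integrable (fun ω => (n ω i - 1) * (A.mulVec (x ω) i * x ω j)) P :=
    hI1.integrable_mul hfi hg1int
  have hfg2 : Integrable (fun ω => (n ω i - 1) * A.mulVec (x ω) i) P :=
    hI2.integrable_mul hfi (hAx2.integrable one_le_two)
  -- the two vanishing terms
  have h1 : ∫ ω, (n ω i - 1) * (A.mulVec (x ω) i * x ω j) ∂P = 0 := by
    have := hI1.integral_fun_mul_eq_mul_integral hfi.aestronglyMeasurable hg1int.aestronglyMeasurable
    simpa [Pi.mul_apply, hEf] using this
  have h2 : ∫ ω, (n ω i - 1) * A.mulVec (x ω) i ∂P = 0 := by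
    have := hI2.integral_fun_mul_eq_mul_integral hfi.aestronglyMeasurable
      (hAx2.integrable one_le_two).aestronglyMeasurable
    simpa [Pi.mul_apply, hEf] using this
  -- assemble
  have hA : ∫ ω, e ω i * x ω j ∂P = ∫ ω, η ω i * x ω j ∂P := by
    have : (fun ω => e ω i * x ω j)
        = fun ω => (n ω i - 1) * (A.mulVec (x ω) i * x ω j) + η ω i * x ω j := by
      funext ω; show ((n ω i - 1) * A.mulVec (x ω) i + η ω i) * x ω j = _; ring
    rw [this, integral_add hfg1 hηxint, h1, zero_add]
  have hB : ∫ ω, e ω i ∂P = ∫ ω, η ω i ∂P := by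
    have : (fun ω => e ω i)
        = fun ω => (n ω i - 1) * A.mulVec (x ω) i + η ω i := rfl
    rw [this, integral_add hfg2 hηint, h2, zero_add]
  rw [hA, hB]
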